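/- Let q ≥ 2 and let r, s, t, u, α, β be integers with t − qs = t̂ + (q+1)α where 0 ≤ t̂ < q+1, and u + q²s − (q+1)α = (q³+q²)β + û, and set r̂ = r − s + (q²+q)α + (q³+q²)β. Define Ω_{r,s,t,u} = {(i,j,k) ∈ ℤ³ : −r ≤ i, −s ≤ i + (q²+q)k < −s + (q²+q), −t ≤ qi + (q²+q)j + (q+1)k < −t + (q²+q), −u ≤ −q²i − (q³−q)j − (q³+q²−q−1)k}. Then #Ω_{r,s,t,u} = #Ω_{r̂,0,t̂,û} and r + (q−1)s + (q−1)t + u = r̂ + (q−1)t̂ + û. -/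
import Mathlib


/-- The lattice point set Ω_{r,s,t,u}: (i,j,k) with −r ≤ i,
    −s ≤ i+(q²+q)k < −s+(q²+q), −t ≤ qi+(q²+q)j+(q+1)k < −t+(q²+q),
    −u ≤ −q²i−(q³−q)j−(q³+q²−q−1)k. -/
def Omega (q r s t u : ℤ) : Set (ℤ × ℤ × ℤ) :=
  {p | -r ≤ p.1 ∧
       -s ≤ p.1 + (q ^ 2 + q) * p.2.2 ∧
       p.1 + (q ^ 2 + q) * p.2.2 < -s + (q ^ 2 + q) ∧
       -t ≤ q * p.1 + (q ^ 2 + q) * p.2.1 + (q + 1) * p.2.2 ∧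
       q * p.1 + (q ^ 2 + q) * p.2.1 + (q + 1) * p.2.2 < -t + (q ^ 2 + q) ∧
       -u ≤ -q ^ 2 * p.1 - (q ^ 3 - q) * p.2.1 - (q ^ 3 + q ^ 2 - q - 1) * p.2.2}

/-- Lemma (reduction): if t − qs = t̂ + (q+1)α with 0 ≤ t̂ < q+1,
    u + q²s − (q+1)α = (q³+q²)β + û and r̂ = r − s + (q²+q)α + (q³+q²)β, then
    #Ω_{r,s,t,u} = #Ω_{r̂,0,t̂,û} and
    r + (q−1)s + (q−1)t + u = r̂ + (q−1)t̂ + û. -/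
theorem stmt_11 (q r s t u α β that uhat rhat : ℤ) (hq : 2 ≤ q)
    (hthat0 : 0 ≤ that) (hthat1 : that < q + 1)
    (h1 : t - q * s = that + (q + 1) * α)
    (h2 : u + q ^ 2 * s - (q + 1) * α = (q ^ 3 + q ^ 2) * β + uhat)
    (h3 : rhat = r - s + (q ^ 2 + q) * α + (q ^ 3 + q ^ 2) * β) :
    (Omega q r s t u).ncard = (Omega q rhat 0 that uhat).ncard ∧
    r + (q - 1) * s + (q - 1) * t + u = rhat + (q - 1) * that + uhat := by
  have hthat : that = t - q * s - (q + 1) * α := by linarith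
  have huhat : uhat = u + q ^ 2 * s - (q + 1) * α - (q ^ 3 + q ^ 2) * β := by linarith
  subst h3 hthat huhat
  constructor
  · have hset : Omega q (r - s + (q ^ 2 + q) * α + (q ^ 3 + q ^ 2) * β) 0
        (t - q * s - (q + 1) * α)
        (u + q ^ 2 * s - (q + 1) * α - (q ^ 3 + q ^ 2) * β) =
        (fun p : ℤ × ℤ × ℤ =>
          (p.1 + (s - (q ^ 2 + q) * α - (q ^ 3 + q ^ 2) * β),
           p.2.1 + (q * α - (1 - q ^ 2) * β),
           p.2.2 + (α + q * β))) '' Omega q r s t u := by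
      ext ⟨I, J, K⟩
      simp only [Omega, Set.mem_image, Set.mem_setOf_eq, Prod.mk.injEq, Prod.exists]
      constructor
      · rintro ⟨c1, c2, c3, c4, c5, c6⟩
        refine ⟨I - (s - (q ^ 2 + q) * α - (q ^ 3 + q ^ 2) * β),
          J - (q * α - (1 - q ^ 2) * β), K - (α + q * β),
          ⟨?_, ?_, ?_, ?_, ?_, ?_⟩, by ring, by ring, by ring⟩ <;>
          [linarith; linarith; linarith; linarith; linarith; linarith]
      · rintro ⟨i, j, k, ⟨c1, c2, c3, c4, c5, c6⟩, rfl, rfl, rfl⟩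
        refine ⟨?_, ?_, ?_, ?_, ?_, ?_⟩ <;>
          [linarith; linarith; linarith; linarith; linarith; linarith]
    rw [hset, Set.ncard_image_of_injective]
    intro p1 p2 h
    simp only [Prod.mk.injEq] at h
    obtain ⟨e1, e2, e3⟩ := h
    exact Prod.ext (by linarith) (Prod.ext (by linarith) (by linarith))
  · ring
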